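/- Let d : [0,∞) → (0,∞) be C² with d̈ = -k·(ḋ/d) - α(t), k > 0, α continuous, bounded, and converging to a constant α⁰ > 0. If d(t) → 0 as t → ∞, then ḋ/d → -α⁰/k and d̈(t) → 0 as t → ∞. -/

import Mathlib

open Real Filter

/-- If `f` is differentiable with `deriv f ≤ -c` on `[a,b]`, it decays linearly. -/
private lemma decay_aux (f : ℝ → ℝ) (c a b : ℝ) (hf : Differentiable ℝ f) (hab : a ≤ b)
    (hder : ∀ u ∈ Set.Icc a b, deriv f u ≤ -c) :
    f b ≤ f a - c * (b - a) := by
  have hg : ∀ u : ℝ, HasDerivAt (fun t => f t + c * t) (deriv f u + c) u := by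
    intro u
    have h2 : HasDerivAt (fun t : ℝ => c * t) c u := by
      simpa using (hasDerivAt_id u).const_mul c
    exact (hf u).hasDerivAt.add h2
  have hA : AntitoneOn (fun t => f t + c * t) (Set.Icc a b) := by
    apply antitoneOn_of_deriv_nonpos (convex_Icc a b)
    · exact (hf.continuous.add (continuous_const.mul continuous_id)).continuousOn
    · intro u _
      exact ((hg u).differentiableAt).differentiableWithinAt
    · intro u hu
      rw [interior_Icc] at hu
      rw [(hg u).deriv]
      have := hder u ⟨hu.1.le, hu.2.le⟩
      linarith
  have := hA (Set.left_mem_Icc.mpr hab) (Set.right_mem_Icc.mpr hab) hab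
  simp only at this
  linarith

/-- Barrier lemma: if `deriv f ≤ -c < 0` whenever `f ≥ 0` (for `t ≥ T`),
then eventually `f ≤ 0`. -/
private lemma ev_nonpos (f : ℝ → ℝ) (T c : ℝ) (hc : 0 < c) (hf : Differentiable ℝ f)
    (hder : ∀ t, T ≤ t → 0 ≤ f t → deriv f t ≤ -c) :
    ∀ᶠ t in atTop, f t ≤ 0 := by
  obtain ⟨t₀, ht₀T, ht₀⟩ : ∃ t₀, T ≤ t₀ ∧ f t₀ ≤ 0 := by
    by_contra h
    push_neg at h
    have hfT : 0 < f T := h T le_rfl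
    have hTb : T ≤ T + f T / c + 1 := by
      have : 0 ≤ f T / c := le_of_lt (div_pos hfT hc)
      linarith
    have hdecay := decay_aux f c T (T + f T / c + 1) hf hTb
      (fun u hu => hder u hu.1 (h u hu.1).le)
    have hfb : 0 < f (T + f T / c + 1) := h _ hTb
    have hcb : c * (T + f T / c + 1 - T) = f T + c := by
      field_simp
      try ring
    linarith
  rw [eventually_atTop]
  refine ⟨t₀, fun t ht => ?_⟩
  by_contra hpos
  push_neg at hpos
  set S := {u : ℝ | u ∈ Set.Icc t₀ t ∧ f u ≤ 0} with hS
  have hne : S.Nonempty := ⟨t₀, ⟨le_rfl, ht⟩, ht₀⟩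
  have hbdd : BddAbove S := ⟨t, fun u hu => hu.1.2⟩
  have hclosed : IsClosed S := by
    have hSeq : S = Set.Icc t₀ t ∩ {u | f u ≤ 0} := rfl
    rw [hSeq]
    exact isClosed_Icc.inter (isClosed_le hf.continuous continuous_const)
  have huS : sSup S ∈ S := hclosed.csSup_mem hne hbdd
  set u := sSup S with hu
  have hu0 : f u ≤ 0 := huS.2
  have hut : u ≤ t := huS.1.2
  have hut' : u < t := by
    rcases lt_or_eq_of_le hut with h' | h'
    · exact h'
    · exfalso; rw [h'] at hu0; linarith
  have hgt : ∀ v, u < v → v ≤ t → 0 < f v := by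
    intro v hv hvt
    by_contra h'
    push_neg at h'
    have : v ≤ u := le_csSup hbdd ⟨⟨huS.1.1.trans hv.le, hvt⟩, h'⟩
    exact absurd this (not_le.mpr hv)
  have hu_nonneg : 0 ≤ f u := by
    have htend : Tendsto f (nhdsWithin u (Set.Ioi u)) (nhds (f u)) :=
      (hf.continuous.tendsto u).mono_left nhdsWithin_le_nhds
    have hev : ∀ᶠ v in nhdsWithin u (Set.Ioi u), 0 ≤ f v := by
      filter_upwards [Ioc_mem_nhdsGT_of_mem (Set.mem_Ico.mpr ⟨le_rfl, hut'⟩)] with v hv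
      exact (hgt v hv.1 hv.2).le
    exact ge_of_tendsto htend hev
  have hderIcc : ∀ v ∈ Set.Icc u t, deriv f v ≤ -c := by
    intro v hv
    rcases eq_or_lt_of_le hv.1 with h' | h'
    · rw [← h']; exact hder u (ht₀T.trans huS.1.1) hu_nonneg
    · exact hder v (ht₀T.trans (huS.1.1.trans hv.1)) (hgt v h' hv.2).le
  have hdecay := decay_aux f c u t hf hut hderIcc
  nlinarith [mul_pos hc (sub_pos.mpr hut')]

/-- If d > 0 is C² with d̈ = -k(ḋ/d) - α, α continuous, bounded, and
converging to α⁰ > 0, and d(t) → 0, then ḋ/d → -α⁰/k and d̈ → 0. -/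
theorem stmt_16
    (d α : ℝ → ℝ) (k α₀ : ℝ) (hk : 0 < k) (hα₀ : 0 < α₀)
    (hd : ContDiff ℝ 2 d)
    (hpos : ∀ t ≥ (0:ℝ), d t > 0)
    (hα_cont : Continuous α)
    (hα_bdd : ∃ M : ℝ, ∀ t ≥ (0:ℝ), |α t| ≤ M)
    (hα_lim : Tendsto α atTop (nhds α₀))
    (hode : ∀ t ≥ (0:ℝ),
      deriv (deriv d) t = -k * (deriv d t / d t) - α t)
    (hlim : Tendsto d atTop (nhds 0)) :
    Tendsto (fun t => deriv d t / d t) atTop (nhds (-α₀ / k)) ∧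
    Tendsto (fun t => deriv (deriv d) t) atTop (nhds 0) := by
  have hd1 : Differentiable ℝ d := hd.differentiable (by norm_num)
  have hd2 : Differentiable ℝ (deriv d) := by
    have h : ContDiff ℝ ((1:ℕ)+1) d := by exact_mod_cast hd
    exact ((contDiff_succ_iff_deriv.mp h).2.2).differentiable (by norm_num)
  have key : ∀ ε : ℝ, 0 < ε → ε < α₀ / k →
      ∀ᶠ t in atTop, |deriv d t / d t + α₀ / k| ≤ ε := by
    intro ε hε hεk
    set γ₁ := α₀ / k + ε with hγ₁
    set γ₂ := α₀ / k - ε with hγ₂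
    have hαk : 0 < α₀ / k := div_pos hα₀ hk
    have hγ₂pos : 0 < γ₂ := sub_pos.mpr hεk
    have hγ₁pos : 0 < γ₁ := by positivity
    have hγ₂₁ : γ₂ ≤ γ₁ := by simp only [hγ₁, hγ₂]; linarith
    clear_value γ₁ γ₂
    set δ := min (k / γ₁) (k * ε / 4 / γ₁ ^ 2) with hδ
    have hδpos : 0 < δ :=
      lt_min (div_pos hk hγ₁pos) (div_pos (by positivity) (pow_pos hγ₁pos 2))
    obtain ⟨T, hT⟩ : ∃ T, ∀ t ≥ T, 0 ≤ t ∧ d t < δ ∧ |α t - α₀| < k * ε / 4 := by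
      have h1 : ∀ᶠ t in atTop, d t < δ := hlim.eventually_lt_const hδpos
      have h2 : ∀ᶠ t in atTop, |α t - α₀| < k * ε / 4 := by
        have := Metric.tendsto_nhds.mp hα_lim (k * ε / 4) (by positivity)
        simpa [Real.dist_eq] using this
      have h3 : ∀ᶠ t in atTop, (0:ℝ) ≤ t := eventually_ge_atTop 0
      exact eventually_atTop.mp ((h3.and (h1.and h2)).mono (fun t h => ⟨h.1, h.2.1, h.2.2⟩))
    have hkγ₁ : k * γ₁ = α₀ + k * ε := by
      rw [hγ₁]; field_simp; try ring
    have hkγ₂ : k * γ₂ = α₀ - k * ε := by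
      rw [hγ₂]; field_simp; try ring
    -- common facts at t ≥ T
    have hfacts : ∀ t, T ≤ t → 0 < d t ∧ d t ≤ k / γ₁ ∧ γ₁ ^ 2 * d t ≤ k * ε / 4 ∧
        γ₂ ^ 2 * d t ≤ k * ε / 4 ∧ |α t - α₀| < k * ε / 4 := by
      intro t hTt
      obtain ⟨ht0, hdδ, hαb⟩ := hT t hTt
      have hx : 0 < d t := hpos t ht0
      have hxk : d t ≤ k / γ₁ := (hdδ.le.trans (min_le_left _ _))
      have hx1 : γ₁ ^ 2 * d t ≤ k * ε / 4 := by
        have h' : d t ≤ k * ε / 4 / γ₁ ^ 2 := hdδ.le.trans (min_le_right _ _)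
        calc γ₁ ^ 2 * d t ≤ γ₁ ^ 2 * (k * ε / 4 / γ₁ ^ 2) := by
              exact mul_le_mul_of_nonneg_left h' (by positivity)
          _ = k * ε / 4 := by field_simp; try ring
      have hx2 : γ₂ ^ 2 * d t ≤ k * ε / 4 := by
        refine le_trans ?_ hx1
        have : γ₂ ^ 2 ≤ γ₁ ^ 2 := by nlinarith
        exact mul_le_mul_of_nonneg_right this hx.le
      exact ⟨hx, hxk, hx1, hx2, hαb⟩
    -- f₁ := -ḋ - γ₁ d  is eventually ≤ 0
    have hf₁der : ∀ t : ℝ, HasDerivAt (fun s => -(deriv d s) - γ₁ * d s)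
        (-(deriv (deriv d) t) - γ₁ * deriv d t) t := fun t =>
      ((hd2 t).hasDerivAt.neg).sub ((hd1 t).hasDerivAt.const_mul γ₁)
    have hf₁ : ∀ᶠ t in atTop, -(deriv d t) - γ₁ * d t ≤ 0 := by
      apply ev_nonpos (fun s => -(deriv d s) - γ₁ * d s) T (k * ε / 2) (by positivity)
        ((hd2.neg).sub (hd1.const_mul γ₁))
      intro t hTt hge
      obtain ⟨hx, hxk, hx1, _, hαb⟩ := hfacts t hTt
      have ht0 : (0:ℝ) ≤ t := (hT t hTt).1
      rw [(hf₁der t).deriv, hode t ht0]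
      have hv : deriv d t ≤ -γ₁ * d t := by linarith
      have hcoef : 0 ≤ k / d t - γ₁ := by
        rw [sub_nonneg, le_div_iff₀ hx]
        calc γ₁ * d t ≤ γ₁ * (k / γ₁) := mul_le_mul_of_nonneg_left hxk hγ₁pos.le
          _ = k := by field_simp
      have hmain : deriv d t * (k / d t - γ₁) ≤ (-γ₁ * d t) * (k / d t - γ₁) :=
        mul_le_mul_of_nonneg_right hv hcoef
      have hexp : (-γ₁ * d t) * (k / d t - γ₁) = -(k * γ₁) + γ₁ ^ 2 * d t := by
        field_simp
        ring
      have hrw : -(-k * (deriv d t / d t) - α t) - γ₁ * deriv d t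
          = deriv d t * (k / d t - γ₁) + α t := by
        field_simp
        ring
      have hα' : α t ≤ α₀ + k * ε / 4 := by
        have := abs_lt.mp hαb
        linarith [this.2]
      have hmain2 : deriv d t * (k / d t - γ₁) ≤ -(k * γ₁) + γ₁ ^ 2 * d t := by
        rw [← hexp]; exact hmain
      rw [hrw]
      linarith [hmain2]
    -- f₂ := ḋ + γ₂ d  is eventually ≤ 0
    have hf₂der : ∀ t : ℝ, HasDerivAt (fun s => deriv d s + γ₂ * d s)
        (deriv (deriv d) t + γ₂ * deriv d t) t := fun t =>
      (hd2 t).hasDerivAt.add ((hd1 t).hasDerivAt.const_mul γ₂)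
    have hf₂ : ∀ᶠ t in atTop, deriv d t + γ₂ * d t ≤ 0 := by
      apply ev_nonpos (fun s => deriv d s + γ₂ * d s) T (k * ε / 2) (by positivity)
        (hd2.add (hd1.const_mul γ₂))
      intro t hTt hge
      obtain ⟨hx, hxk, _, hx2, hαb⟩ := hfacts t hTt
      have ht0 : (0:ℝ) ≤ t := (hT t hTt).1
      rw [(hf₂der t).deriv, hode t ht0]
      have hv : -(deriv d t) ≤ γ₂ * d t := by linarith
      have hcoef : 0 ≤ k / d t - γ₂ := by
        rw [sub_nonneg, le_div_iff₀ hx]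
        calc γ₂ * d t ≤ γ₁ * d t := mul_le_mul_of_nonneg_right hγ₂₁ hx.le
          _ ≤ γ₁ * (k / γ₁) := mul_le_mul_of_nonneg_left hxk hγ₁pos.le
          _ = k := by field_simp
      have hmain : (-(deriv d t)) * (k / d t - γ₂) ≤ (γ₂ * d t) * (k / d t - γ₂) :=
        mul_le_mul_of_nonneg_right hv hcoef
      have hexp : (γ₂ * d t) * (k / d t - γ₂) = k * γ₂ - γ₂ ^ 2 * d t := by
        field_simp
      have hrw : -k * (deriv d t / d t) - α t + γ₂ * deriv d t
          = (-(deriv d t)) * (k / d t - γ₂) - α t := by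
        field_simp
        ring
      have hα' : α₀ - k * ε / 4 ≤ α t := by
        have := abs_lt.mp hαb
        linarith [this.1]
      have hmain2 : -deriv d t * (k / d t - γ₂) ≤ k * γ₂ - γ₂ ^ 2 * d t := by
        rw [← hexp]; exact hmain
      rw [hrw]
      have hγ₂sq : 0 ≤ γ₂ ^ 2 * d t := by positivity
      linarith [hmain2]
    filter_upwards [hf₁, hf₂, eventually_ge_atTop (0:ℝ)] with t h1 h2 h0
    have hx : 0 < d t := hpos t h0
    have hlow : -γ₁ ≤ deriv d t / d t := by
      rw [le_div_iff₀ hx]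
      linarith
    have hhigh : deriv d t / d t ≤ -γ₂ := by
      rw [div_le_iff₀ hx]
      linarith
    rw [abs_le]
    constructor
    · simp only [hγ₁] at hlow; linarith
    · simp only [hγ₂] at hhigh; linarith
  have hφ : Tendsto (fun t => deriv d t / d t) atTop (nhds (-α₀ / k)) := by
    rw [Metric.tendsto_atTop]
    intro ε hε
    set ε' := min (ε / 2) (α₀ / (2 * k)) with hε'
    have hε'pos : 0 < ε' := lt_min (by linarith) (by positivity)
    have hε'k : ε' < α₀ / k := by
      have h1 : ε' ≤ α₀ / (2 * k) := min_le_right _ _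
      have h2 : α₀ / (2 * k) < α₀ / k := div_lt_div_of_pos_left hα₀ hk (by linarith)
      linarith
    obtain ⟨N, hN⟩ := eventually_atTop.mp (key ε' hε'pos hε'k)
    refine ⟨N, fun t ht => ?_⟩
    have h3 := hN t ht
    rw [Real.dist_eq]
    have h4 : deriv d t / d t - (-α₀ / k) = deriv d t / d t + α₀ / k := by ring
    rw [h4]
    have h5 : ε' ≤ ε / 2 := min_le_left _ _
    linarith
  refine ⟨hφ, ?_⟩
  have h1 : Tendsto (fun t => -k * (deriv d t / d t) - α t) atTop
      (nhds (-k * (-α₀ / k) - α₀)) := (hφ.const_mul (-k)).sub hα_lim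
  have h2 : -k * (-α₀ / k) - α₀ = 0 := by field_simp; ring
  rw [h2] at h1
  apply h1.congr'
  filter_upwards [eventually_ge_atTop (0:ℝ)] with t ht
  exact (hode t ht).symm
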